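/- Fix an integer k ≥ 1 and let F(n) = ∑_{w ∈ [k]^n} q^{#12(w)} ∈ ℤ[q] for n ≥ 0, with the convention F(m) = 0 for m < 0 and F(0) = 1. Then for every integer n ≥ 1, F(n) = ∑_{j=1}^{k} C(k, j)·(q - 1)^(j-1)·F(n - j), as an identity of polynomials in q. -/

import Mathlib

open Polynomial

/-- The `i`-th letter (1-based value in `{1,…,k}`) of a word `w ∈ [k]^n`,
with value `0` outside the word. -/
def letter {n k : ℕ} (w : Fin n → Fin k) (i : ℕ) : ℕ :=
  if h : i < n then (w ⟨i, h⟩ : ℕ) + 1 else 0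

/-- `#12(w)`: the number of indices `i` (0-based, `i+1 < n`) with `w i < w (i+1)`. -/
def occ12 {n k : ℕ} (w : Fin n → Fin k) : ℕ :=
  ((Finset.range n).filter (fun i => i + 1 < n ∧ letter w i < letter w (i + 1))).card

-- occ12 as a sum
lemma occ12_eq_sum {n k : ℕ} (w : Fin n → Fin k) :
    occ12 w = ∑ i ∈ Finset.range n,
      (if i + 1 < n ∧ letter w i < letter w (i + 1) then 1 else 0) := by
  rw [occ12, Finset.card_filter]

lemma occ12_zero {k : ℕ} (w : Fin 0 → Fin k) : occ12 w = 0 := by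
  simp [occ12]

lemma occ12_one {k : ℕ} (w : Fin 1 → Fin k) : occ12 w = 0 := by
  simp [occ12]

lemma letter_cons_zero {n k : ℕ} (a : Fin k) (w : Fin n → Fin k) :
    letter (Fin.cons a w) 0 = (a : ℕ) + 1 := by
  simp [letter]

lemma letter_cons_succ {n k : ℕ} (a : Fin k) (w : Fin n → Fin k) (i : ℕ) :
    letter (Fin.cons a w) (i + 1) = letter w i := by
  unfold letter
  by_cases h : i < n
  · rw [dif_pos (by omega : i + 1 < n + 1), dif_pos h]
    have : (⟨i + 1, by omega⟩ : Fin (n + 1)) = Fin.succ ⟨i, h⟩ := rfl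
    rw [this, Fin.cons_succ]
  · rw [dif_neg (by omega), dif_neg h]

lemma occ12_cons {n k : ℕ} (a : Fin k) (w : Fin (n + 1) → Fin k) :
    occ12 (Fin.cons a w) = occ12 w + (if (a : ℕ) < (w 0 : ℕ) then 1 else 0) := by
  rw [occ12_eq_sum, occ12_eq_sum, Finset.sum_range_succ']
  congr 1
  · apply Finset.sum_congr rfl
    intro i _
    rw [letter_cons_succ, letter_cons_succ]
    congr 1
    simp only [eq_iff_iff]
    omega
  · rw [letter_cons_zero, letter_cons_succ]
    have : letter w 0 = (w 0 : ℕ) + 1 := by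
      unfold letter
      rw [dif_pos (by omega : 0 < n + 1)]
      rfl
    rw [this]
    congr 1
    simp only [eq_iff_iff]
    omega

lemma hockey (m j : ℕ) : ∑ i ∈ Finset.range m, i.choose j = m.choose (j + 1) := by
  induction m with
  | zero => simp
  | succ m ih => rw [Finset.sum_range_succ, ih, Nat.choose_succ_succ, Nat.add_comm]

noncomputable def Fp (k n : ℕ) : ℤ[X] := ∑ w : Fin n → Fin k, (X : ℤ[X]) ^ occ12 w

noncomputable def Hp (k j : ℕ) : ℕ → ℤ[X]
  | 0 => 0
  | (n+1) => ∑ w : Fin (n+1) → Fin k, (X : ℤ[X]) ^ occ12 w * C (((w 0 : ℕ).choose j : ℤ))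

lemma Fp_zero (k : ℕ) : Fp k 0 = 1 := by
  rw [Fp]
  rw [Finset.sum_eq_single_of_mem (fun i => i.elim0) (Finset.mem_univ _)]
  · simp [occ12_zero]
  · intro w _ hw
    exact absurd (_root_.funext fun i : Fin 0 => i.elim0) hw

-- sum splitting via cons
lemma sum_cons {n k : ℕ} (M : Type*) [AddCommMonoid M] (f : (Fin (n+1) → Fin k) → M) :
    ∑ w : Fin (n+1) → Fin k, f w = ∑ a : Fin k, ∑ w : Fin n → Fin k, f (Fin.cons a w) := by
  rw [← (Fin.consEquiv (fun _ => Fin k)).sum_comp f, Fintype.sum_prod_type]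
  rfl

lemma sum_choose_fin (k j : ℕ) : ∑ a : Fin k, ((a : ℕ).choose j : ℤ[X]) = (k.choose (j+1) : ℤ[X]) := by
  rw [Fin.sum_univ_eq_sum_range (fun i => ((i.choose j : ℤ[X])))]
  rw [← Nat.cast_sum, hockey]

lemma sum_choose_fin_lt (k j : ℕ) (b : Fin k) :
    ∑ a ∈ Finset.univ.filter (fun a : Fin k => (a : ℕ) < (b : ℕ)), ((a : ℕ).choose j : ℤ[X])
      = ((b : ℕ).choose (j+1) : ℤ[X]) := by
  rw [Finset.sum_filter,
    Fin.sum_univ_eq_sum_range (fun i => if i < (b : ℕ) then ((i.choose j : ℤ[X])) else 0)]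
  rw [← Finset.sum_subset (Finset.range_subset_range.2 b.isLt.le)
    (by intro i _ hi; rw [if_neg (by simpa using hi)])]
  rw [Finset.sum_congr rfl (fun i hi => if_pos (Finset.mem_range.1 hi)), ← Nat.cast_sum, hockey]

lemma Hp_big (k j n : ℕ) (h : k ≤ j) : Hp k j n = 0 := by
  cases n with
  | zero => rfl
  | succ n =>
    rw [Hp]
    apply Finset.sum_eq_zero
    intro w _
    rw [Nat.choose_eq_zero_of_lt (lt_of_lt_of_le (w 0).isLt h)]
    simp

example : True := trivial

lemma Hp_succ (k j n : ℕ) :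
    Hp k j (n + 1) = C ((k.choose (j+1) : ℤ)) * Fp k n + (X - 1) * Hp k (j+1) n := by
  have key : ∀ (b : Fin k),
      ∑ a : Fin k, (if (a : ℕ) < (b : ℕ) then (X : ℤ[X]) else 1) * C (((a : ℕ).choose j : ℤ))
        = C ((k.choose (j+1) : ℤ)) + (X - 1) * C (((b : ℕ).choose (j+1) : ℤ)) := by
    intro b
    have h1 : ∀ a : Fin k, (if (a : ℕ) < (b : ℕ) then (X : ℤ[X]) else 1)
        = 1 + (if (a : ℕ) < (b : ℕ) then (X - 1 : ℤ[X]) else 0) := by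
      intro a; split <;> ring
    simp_rw [h1, add_mul, one_mul, Finset.sum_add_distrib, ite_mul, zero_mul]
    congr 1
    · simp_rw [C_eq_natCast]
      exact sum_choose_fin k j
    · rw [← Finset.sum_filter]
      simp_rw [C_eq_natCast, ← Finset.mul_sum, sum_choose_fin_lt k j b]
  have hpdef : ∀ m : ℕ, Hp k j (m + 1)
      = ∑ w : Fin (m+1) → Fin k, (X : ℤ[X]) ^ occ12 w * C ((((w 0 : Fin k)) : ℕ).choose j : ℤ) :=
    fun m => rfl
  cases n with
  | zero =>
    rw [hpdef 0, sum_cons]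
    have e : ∀ a : Fin k,
        (∑ w : Fin 0 → Fin k, (X : ℤ[X]) ^ occ12 (Fin.cons a w) *
          C ((((Fin.cons a w : Fin 1 → Fin k) 0 : Fin k) : ℕ).choose j : ℤ))
          = ((a : ℕ).choose j : ℤ[X]) := by
      intro a
      rw [Finset.sum_eq_single_of_mem (fun i => i.elim0) (Finset.mem_univ _)
        (fun w _ hw => absurd (_root_.funext fun i : Fin 0 => i.elim0) hw)]
      rw [occ12_one, pow_zero, one_mul, Fin.cons_zero, C_eq_natCast]
    simp_rw [e]
    rw [sum_choose_fin k j, Fp_zero, mul_one]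
    have h0 : Hp k (j+1) 0 = 0 := rfl
    rw [h0, mul_zero, add_zero, C_eq_natCast]
  | succ m =>
    rw [hpdef (m+1), sum_cons]
    have step : ∀ a : Fin k, ∀ w : Fin (m+1) → Fin k,
        (X : ℤ[X]) ^ occ12 (Fin.cons a w) * C ((((Fin.cons a w : Fin (m+2) → Fin k) 0 : Fin k) : ℕ).choose j : ℤ)
          = (X : ℤ[X]) ^ occ12 w *
            ((if (a : ℕ) < (w 0 : ℕ) then (X : ℤ[X]) else 1) * C (((a : ℕ).choose j : ℤ))) := by
      intro a w
      rw [occ12_cons, Fin.cons_zero, pow_add]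
      split <;> simp <;> ring
    simp_rw [step]
    rw [Finset.sum_comm]
    simp_rw [← Finset.mul_sum, key]
    have hpdef2 : Hp k (j+1) (m + 1)
        = ∑ w : Fin (m+1) → Fin k, (X : ℤ[X]) ^ occ12 w * C ((((w 0 : Fin k)) : ℕ).choose (j+1) : ℤ) :=
      rfl
    rw [hpdef2, Fp]
    simp_rw [mul_add, Finset.sum_add_distrib, Finset.mul_sum]
    refine congrArg₂ (· + ·) ?_ ?_
    · congr 1; ext w; ring
    · congr 1; ext w; ring


lemma Hp_zero_eq (k n : ℕ) (hn : 1 ≤ n) : Hp k 0 n = Fp k n := by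
  obtain ⟨m, rfl⟩ : ∃ m, n = m + 1 := ⟨n - 1, by omega⟩
  have : Hp k 0 (m + 1)
      = ∑ w : Fin (m+1) → Fin k, (X : ℤ[X]) ^ occ12 w * C ((((w 0 : Fin k)) : ℕ).choose 0 : ℤ) :=
    rfl
  rw [this, Fp]
  apply Finset.sum_congr rfl
  intro w _
  rw [Nat.choose_zero_right, Nat.cast_one, C_1, mul_one]

lemma telescope (k n : ℕ) (hn : 1 ≤ n) : ∀ m, m ≤ n →
    Fp k n = (∑ j ∈ Finset.Icc 1 m, C ((k.choose j : ℤ)) * (X - 1) ^ (j - 1) * Fp k (n - j))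
      + (X - 1) ^ m * Hp k m (n - m) := by
  intro m
  induction m with
  | zero =>
    intro _
    rw [pow_zero, one_mul, Nat.sub_zero, Hp_zero_eq k n hn]
    simp
  | succ m ih =>
    intro h
    have h2 : n - m = (n - (m + 1)) + 1 := by omega
    rw [ih (by omega), h2, Hp_succ, Finset.sum_Icc_succ_top (by omega : 1 ≤ m + 1), Nat.add_sub_cancel]
    ring

theorem stmt4 (k : ℕ) (hk : 1 ≤ k) (F : ℤ → ℤ[X])
    (hFneg : ∀ m : ℤ, m < 0 → F m = 0)
    (hF : ∀ n : ℕ, F (n : ℤ) = ∑ w : Fin n → Fin k, (X : ℤ[X]) ^ occ12 w) :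
    ∀ n : ℕ, 1 ≤ n →
      F (n : ℤ) = ∑ j ∈ Finset.Icc 1 k,
        C ((k.choose j : ℤ)) * (X - 1) ^ (j - 1) * F ((n : ℤ) - (j : ℤ)) := by
  intro n hn
  have hFp : ∀ i : ℕ, F (i : ℤ) = Fp k i := fun i => hF i
  have key := telescope k n hn n le_rfl
  have h0 : Hp k n (n - n) = 0 := by rw [Nat.sub_self]; rfl
  rw [h0, mul_zero, add_zero] at key
  -- reduce LHS sum (over Icc 1 n) to Icc 1 (min n k)
  have hA : (∑ j ∈ Finset.Icc 1 n, C ((k.choose j : ℤ)) * (X - 1) ^ (j - 1) * Fp k (n - j))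
      = ∑ j ∈ Finset.Icc 1 (min n k), C ((k.choose j : ℤ)) * (X - 1) ^ (j - 1) * Fp k (n - j) := by
    rw [Finset.sum_subset (Finset.Icc_subset_Icc_right (min_le_left n k))]
    intro j hj hj2
    have : k < j := by
      simp only [Finset.mem_Icc] at hj hj2; omega
    rw [Nat.choose_eq_zero_of_lt this, Nat.cast_zero, map_zero, zero_mul, zero_mul]
  have hB : (∑ j ∈ Finset.Icc 1 k, C ((k.choose j : ℤ)) * (X - 1) ^ (j - 1) * F ((n : ℤ) - (j : ℤ)))
      = ∑ j ∈ Finset.Icc 1 (min n k), C ((k.choose j : ℤ)) * (X - 1) ^ (j - 1) * Fp k (n - j) := by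
    rw [← Finset.sum_subset (Finset.Icc_subset_Icc_right (min_le_right n k))
      (fun j hj hj2 => by
        have hnj : n < j := by simp only [Finset.mem_Icc] at hj hj2; omega
        rw [hFneg ((n : ℤ) - (j : ℤ)) (by omega), mul_zero])]
    apply Finset.sum_congr rfl
    intro j hj
    have hjn : j ≤ n := by
      simp only [Finset.mem_Icc, le_min_iff] at hj; omega
    have hc : ((n : ℤ) - (j : ℤ)) = ((n - j : ℕ) : ℤ) := by omega
    rw [hc, hFp]
  rw [hFp n, key, hA, hB]
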